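/- Backward-induction representation of the optimal control limit: if l_{N+1} = 0, l_N = c·v_{N+1}, and l_n = c·v_{n+1} + E([l_{n+1} - Y_{n+1}]^+ | F_n) for 0 ≤ n ≤ N-1, then for every 0 ≤ n ≤ N, l_n = c·v_{n+1} + E( ∑_{m=n+1}^{N} 1{B_{m,n+1}} · (c·v_{m+1} - Y_m) | F_n ) almost surely, where B_{m,n+1} = {Y_k < l_k for all n+1 ≤ k ≤ m}. -/

import Mathlib

open MeasureTheory Finset

noncomputable def auxM {Ω : Type*} [MeasurableSpace Ω] (μ : Measure Ω)
    (N : ℕ) (ℱ : ℕ → MeasurableSpace Ω) (Y v : ℕ → Ω → ℝ) (c : ℝ) : ℕ → Ω → ℝ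
  | 0 => fun ω => c * v (N + 1) ω
  | (d + 1) => fun ω => c * v (N - d) ω +
      (μ[fun ω' => max (auxM μ N ℱ Y v c d ω' - Y (N - d) ω') 0 | ℱ (N - d - 1)]) ω

/-- Backward-induction representation of the optimal control limit:
if `l_{N+1} = 0`, `l_N = c·v_{N+1}`, and `l_n = c·v_{n+1} + E([l_{n+1} - Y_{n+1}]⁺ | F_n)`
for `0 ≤ n ≤ N-1`, then for every `0 ≤ n ≤ N`,
`l_n = c·v_{n+1} + E(∑_{m=n+1}^{N} 1{B_{m,n+1}}·(c·v_{m+1} - Y_m) | F_n)` a.s.,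
where `B_{m,n+1} = {Y_k < l_k for all n+1 ≤ k ≤ m}`. -/
theorem control_limit_backward_representation
    {Ω : Type*} {m0 : MeasurableSpace Ω} (μ : Measure Ω) [IsProbabilityMeasure μ]
    (N : ℕ) (ℱ : ℕ → MeasurableSpace Ω) (hmono : Monotone ℱ) (hle : ∀ n, ℱ n ≤ m0)
    (Y v : ℕ → Ω → ℝ)
    (hYnn : ∀ n ω, 0 ≤ Y n ω) (hYint : ∀ n, Integrable (Y n) μ)
    (hYmeas : ∀ n, Measurable[ℱ n] (Y n))
    (hvnn : ∀ n ω, 0 ≤ v n ω) (hvint : ∀ n, Integrable (v n) μ)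
    (hvmeas : ∀ k, Measurable[ℱ (k - 1)] (v k))
    (c : ℝ) (hc : 0 < c) (l : ℕ → Ω → ℝ)
    (hlN1 : l (N + 1) = fun _ => 0)
    (hlN : l N = fun ω => c * v (N + 1) ω)
    (hlrec : ∀ n < N, l n =ᵐ[μ] fun ω =>
      c * v (n + 1) ω + (μ[fun ω' => max (l (n + 1) ω' - Y (n + 1) ω') 0 | ℱ n]) ω) :
    ∀ n ≤ N, l n =ᵐ[μ] fun ω =>
      c * v (n + 1) ω +
        (μ[fun ω' => ∑ m ∈ Finset.Icc (n + 1) N,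
            (Set.indicator {ω'' | ∀ k ∈ Finset.Icc (n + 1) m, Y k ω'' < l k ω''}
              (fun _ => (1 : ℝ)) ω') * (c * v (m + 1) ω' - Y m ω') | ℱ n]) ω := by
  set L : ℕ → Ω → ℝ := fun n => auxM μ N ℱ Y v c (N - n) with hLdef
  -- basic equations for L
  have hL_N : L N = fun ω => c * v (N + 1) ω := by
    show auxM μ N ℱ Y v c (N - N) = _
    rw [Nat.sub_self, auxM]
  have hLrec' : ∀ n < N, L n = fun ω =>
      c * v (n + 1) ω + (μ[fun ω' => max (L (n + 1) ω' - Y (n + 1) ω') 0 | ℱ n]) ω := by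
    intro n hn
    have h1 : N - n = (N - (n + 1)) + 1 := by omega
    have h2 : N - (N - (n + 1)) = n + 1 := by omega
    show auxM μ N ℱ Y v c (N - n) = _
    rw [h1, auxM, h2]
    rfl
  -- strong measurability of L n w.r.t. ℱ n
  have hLsm : ∀ n ≤ N, StronglyMeasurable[ℱ n] (L n) := by
    intro n hn
    rcases eq_or_lt_of_le hn with rfl | hn
    · rw [hL_N]
      exact (measurable_const.mul (hvmeas (n + 1))).stronglyMeasurable
    · rw [hLrec' n hn]
      exact ((measurable_const.mul (hvmeas (n + 1))).stronglyMeasurable).add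
        stronglyMeasurable_condExp
  have hLm0 : ∀ n ≤ N, Measurable (L n) := fun n hn =>
    ((hLsm n hn).measurable).mono (hle n) le_rfl
  -- integrability of L n
  have hLint : ∀ n ≤ N, Integrable (L n) μ := by
    intro n hn
    rcases eq_or_lt_of_le hn with rfl | hn
    · rw [hL_N]; exact (hvint (n + 1)).const_mul c
    · rw [hLrec' n hn]
      exact (((hvint (n + 1)).const_mul c).add integrable_condExp)
  -- l n =ᵐ L n
  have hlL : ∀ n ≤ N, l n =ᵐ[μ] L n := by
    have key : ∀ d, ∀ n, n + d = N → l n =ᵐ[μ] L n := by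
      intro d
      induction d with
      | zero =>
        intro n h
        rw [Nat.add_zero] at h
        subst h
        rw [hlN, hL_N]
      | succ d ih =>
        intro n h
        have hn : n < N := by omega
        have ih' := ih (n + 1) (by omega)
        refine (hlrec n hn).trans ?_
        rw [hLrec' n hn]
        have hcond : μ[fun ω' => max (l (n + 1) ω' - Y (n + 1) ω') 0 | ℱ n]
            =ᵐ[μ] μ[fun ω' => max (L (n + 1) ω' - Y (n + 1) ω') 0 | ℱ n] := by
          refine condExp_congr_ae ?_
          filter_upwards [ih'] with ω hω
          rw [hω]
        filter_upwards [hcond] with ω hω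
        rw [hω]
    intro n hn
    exact key (N - n) n (by omega)
  -- the main representation for L
  have main : ∀ n ≤ N, L n =ᵐ[μ] fun ω =>
      c * v (n + 1) ω +
        (μ[fun ω' => ∑ m ∈ Finset.Icc (n + 1) N,
            (Set.indicator {ω'' | ∀ k ∈ Finset.Icc (n + 1) m, Y k ω'' < L k ω''}
              (fun _ => (1 : ℝ)) ω') * (c * v (m + 1) ω' - Y m ω') | ℱ n]) ω := by
    have key : ∀ d, ∀ n, n + d = N → L n =ᵐ[μ] fun ω =>
        c * v (n + 1) ω +
          (μ[fun ω' => ∑ m ∈ Finset.Icc (n + 1) N,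
              (Set.indicator {ω'' | ∀ k ∈ Finset.Icc (n + 1) m, Y k ω'' < L k ω''}
                (fun _ => (1 : ℝ)) ω') * (c * v (m + 1) ω' - Y m ω') | ℱ n]) ω := by
      intro d
      induction d with
      | zero =>
        intro n h
        rw [Nat.add_zero] at h
        subst h
        have hempty : Finset.Icc (n + 1) n = (∅ : Finset ℕ) :=
          Finset.Icc_eq_empty (by omega)
        have h0 : (fun ω' => ∑ m ∈ Finset.Icc (n + 1) n,
            (Set.indicator {ω'' | ∀ k ∈ Finset.Icc (n + 1) m, Y k ω'' < L k ω''}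
              (fun _ => (1 : ℝ)) ω') * (c * v (m + 1) ω' - Y m ω')) = (0 : Ω → ℝ) := by
          funext ω'
          rw [hempty]
          simp
        rw [hL_N, h0, condExp_zero]
        filter_upwards with ω
        simp
      | succ d ih =>
        intro n h
        have hn : n < N := by omega
        have ih' := ih (n + 1) (by omega)
        -- notation
        set B : Set Ω := {ω | Y (n + 1) ω < L (n + 1) ω} with hBdef
        set S : Ω → ℝ := fun ω' => ∑ m ∈ Finset.Icc (n + 1 + 1) N,
            (Set.indicator {ω'' | ∀ k ∈ Finset.Icc (n + 1 + 1) m, Y k ω'' < L k ω''}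
              (fun _ => (1 : ℝ)) ω') * (c * v (m + 1) ω' - Y m ω') with hSdef
        set F : Ω → ℝ := fun ω' => c * v (n + 1 + 1) ω' - Y (n + 1) ω' with hFdef
        set T : Ω → ℝ := fun ω' => ∑ m ∈ Finset.Icc (n + 1) N,
            (Set.indicator {ω'' | ∀ k ∈ Finset.Icc (n + 1) m, Y k ω'' < L k ω''}
              (fun _ => (1 : ℝ)) ω') * (c * v (m + 1) ω' - Y m ω') with hTdef
        -- measurability of B
        have hBmeas : MeasurableSet[ℱ (n + 1)] B :=
          measurableSet_lt (hYmeas (n + 1)) ((hLsm (n + 1) (by omega)).measurable)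
        have hBmeas0 : MeasurableSet B := hle (n + 1) _ hBmeas
        -- measurability of the sets C m (used in S)
        have hCmeas : ∀ m ≤ N, MeasurableSet
            {ω'' | ∀ k ∈ Finset.Icc (n + 1 + 1) m, Y k ω'' < L k ω''} := by
          intro m hm
          have : {ω'' | ∀ k ∈ Finset.Icc (n + 1 + 1) m, Y k ω'' < L k ω''}
              = ⋂ k ∈ (Finset.Icc (n + 1 + 1) m : Set ℕ), {ω'' | Y k ω'' < L k ω''} := by
            ext ω''; simp
          rw [this]
          refine MeasurableSet.biInter (Set.to_countable _) (fun k hk => ?_)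
          simp only [Finset.coe_Icc, Set.mem_Icc] at hk
          exact measurableSet_lt ((hYmeas k).mono (hle k) le_rfl)
            (hLm0 k (by omega))
        -- integrability of S
        have hS_int : Integrable S μ := by
          refine integrable_finset_sum _ (fun m hm => ?_)
          simp only [Finset.mem_Icc] at hm
          have heq : (fun ω' => (Set.indicator
              {ω'' | ∀ k ∈ Finset.Icc (n + 1 + 1) m, Y k ω'' < L k ω''}
              (fun _ => (1 : ℝ)) ω') * (c * v (m + 1) ω' - Y m ω'))
              = Set.indicator {ω'' | ∀ k ∈ Finset.Icc (n + 1 + 1) m, Y k ω'' < L k ω''}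
                (fun ω' => c * v (m + 1) ω' - Y m ω') := by
            funext ω'
            by_cases hω : ω' ∈ {ω'' | ∀ k ∈ Finset.Icc (n + 1 + 1) m, Y k ω'' < L k ω''}
            · rw [Set.indicator_of_mem hω, Set.indicator_of_mem hω]; ring
            · rw [Set.indicator_of_notMem hω, Set.indicator_of_notMem hω]; ring
          rw [heq]
          exact (((hvint (m + 1)).const_mul c).sub (hYint m)).indicator (hCmeas m hm.2)
        have hF_int : Integrable (B.indicator F) μ :=
          (((hvint (n + 1 + 1)).const_mul c).sub (hYint (n + 1))).indicator hBmeas0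
        have hBS_int : Integrable (B.indicator S) μ := hS_int.indicator hBmeas0
        have hG_int : Integrable (B.indicator (μ[S | ℱ (n + 1)])) μ :=
          integrable_condExp.indicator hBmeas0
        -- Step A : the recursion term equals the indicator form
        have hstepA : (fun ω' => max (L (n + 1) ω' - Y (n + 1) ω') 0)
            = B.indicator (fun ω' => L (n + 1) ω' - Y (n + 1) ω') := by
          funext ω'
          by_cases hω : ω' ∈ B
          · rw [Set.indicator_of_mem hω]
            exact max_eq_left (sub_nonneg.2 (le_of_lt hω))
          · rw [Set.indicator_of_notMem hω]
            have h' : ¬ Y (n + 1) ω' < L (n + 1) ω' := hω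
            exact max_eq_right (sub_nonpos.2 (not_lt.1 h'))
        -- Step B : use the induction hypothesis inside the indicator
        have hstepB : B.indicator (fun ω' => L (n + 1) ω' - Y (n + 1) ω')
            =ᵐ[μ] fun ω' => B.indicator F ω' + B.indicator (μ[S | ℱ (n + 1)]) ω' := by
          filter_upwards [ih'] with ω hω
          by_cases hB : ω ∈ B
          · rw [Set.indicator_of_mem hB, Set.indicator_of_mem hB, Set.indicator_of_mem hB]
            rw [hω]
            simp only [hFdef]
            ring
          · rw [Set.indicator_of_notMem hB, Set.indicator_of_notMem hB,
              Set.indicator_of_notMem hB]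
            ring
        -- Step E : pull the indicator inside the inner conditional expectation and tower
        have hstepE : μ[B.indicator (μ[S | ℱ (n + 1)]) | ℱ n] =ᵐ[μ] μ[B.indicator S | ℱ n] := by
          have h1 : μ[B.indicator S | ℱ (n + 1)] =ᵐ[μ] B.indicator (μ[S | ℱ (n + 1)]) :=
            condExp_indicator hS_int hBmeas
          calc μ[B.indicator (μ[S | ℱ (n + 1)]) | ℱ n]
              =ᵐ[μ] μ[μ[B.indicator S | ℱ (n + 1)] | ℱ n] := condExp_congr_ae h1.symm
            _ =ᵐ[μ] μ[B.indicator S | ℱ n] :=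
                condExp_condExp_of_le (hmono (Nat.le_succ n)) (hle (n + 1))
        -- Step G : recombine into T
        have hstepG : (fun ω' => B.indicator F ω' + B.indicator S ω') = T := by
          funext ω
          have hsplit : Finset.Icc (n + 1) N = insert (n + 1) (Finset.Icc (n + 1 + 1) N) := by
            ext k; simp only [Finset.mem_Icc, Finset.mem_insert]; omega
          have hnotmem : (n + 1) ∉ Finset.Icc (n + 1 + 1) N := by simp
          simp only [hTdef]
          rw [hsplit, Finset.sum_insert hnotmem]
          by_cases hB : ω ∈ B
          · rw [Set.indicator_of_mem hB, Set.indicator_of_mem hB]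
            have hD1 : ω ∈ {ω'' | ∀ k ∈ Finset.Icc (n + 1) (n + 1), Y k ω'' < L k ω''} := by
              intro k hk
              simp only [Finset.mem_Icc] at hk
              have : k = n + 1 := by omega
              subst this
              exact hB
            rw [Set.indicator_of_mem hD1]
            have hsum : S ω = ∑ m ∈ Finset.Icc (n + 1 + 1) N,
                (Set.indicator {ω'' | ∀ k ∈ Finset.Icc (n + 1) m, Y k ω'' < L k ω''}
                  (fun _ => (1 : ℝ)) ω) * (c * v (m + 1) ω - Y m ω) := by
              simp only [hSdef]
              refine Finset.sum_congr rfl (fun m hm => ?_)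
              simp only [Finset.mem_Icc] at hm
              have hiff : (ω ∈ {ω'' | ∀ k ∈ Finset.Icc (n + 1 + 1) m, Y k ω'' < L k ω''})
                  ↔ (ω ∈ {ω'' | ∀ k ∈ Finset.Icc (n + 1) m, Y k ω'' < L k ω''}) := by
                constructor
                · intro hmem k hk
                  simp only [Finset.mem_Icc] at hk
                  by_cases hkeq : k = n + 1
                  · subst hkeq; exact hB
                  · exact hmem k (by simp only [Finset.mem_Icc]; omega)
                · intro hmem k hk
                  simp only [Finset.mem_Icc] at hk
                  exact hmem k (by simp only [Finset.mem_Icc]; omega)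
              by_cases hmem : ω ∈ {ω'' | ∀ k ∈ Finset.Icc (n + 1 + 1) m, Y k ω'' < L k ω''}
              · rw [Set.indicator_of_mem hmem, Set.indicator_of_mem (hiff.1 hmem)]
              · rw [Set.indicator_of_notMem hmem,
                  Set.indicator_of_notMem (fun h => hmem (hiff.2 h))]
            rw [hsum]
            ring
          · rw [Set.indicator_of_notMem hB, Set.indicator_of_notMem hB]
            have hD1 : ω ∉ {ω'' | ∀ k ∈ Finset.Icc (n + 1) (n + 1), Y k ω'' < L k ω''} := by
              intro hmem
              exact hB (hmem (n + 1) (by simp))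
            rw [Set.indicator_of_notMem hD1]
            have hsum : ∀ m ∈ Finset.Icc (n + 1 + 1) N,
                (Set.indicator {ω'' | ∀ k ∈ Finset.Icc (n + 1) m, Y k ω'' < L k ω''}
                  (fun _ => (1 : ℝ)) ω) * (c * v (m + 1) ω - Y m ω) = 0 := by
              intro m hm
              simp only [Finset.mem_Icc] at hm
              have hD : ω ∉ {ω'' | ∀ k ∈ Finset.Icc (n + 1) m, Y k ω'' < L k ω''} := by
                intro hmem
                exact hB (hmem (n + 1) (by simp only [Finset.mem_Icc]; omega))
              rw [Set.indicator_of_notMem hD]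
              ring
            rw [Finset.sum_congr rfl hsum]
            simp
        -- Put the conditional-expectation chain together
        have hsuff : μ[fun ω' => max (L (n + 1) ω' - Y (n + 1) ω') 0 | ℱ n]
            =ᵐ[μ] μ[T | ℱ n] := by
          calc μ[fun ω' => max (L (n + 1) ω' - Y (n + 1) ω') 0 | ℱ n]
              =ᵐ[μ] μ[fun ω' => B.indicator F ω' + B.indicator (μ[S | ℱ (n + 1)]) ω' | ℱ n] := by
                rw [hstepA]; exact condExp_congr_ae hstepB
            _ =ᵐ[μ] μ[B.indicator F | ℱ n] + μ[B.indicator (μ[S | ℱ (n + 1)]) | ℱ n] :=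
                condExp_add hF_int hG_int (ℱ n)
            _ =ᵐ[μ] μ[B.indicator F | ℱ n] + μ[B.indicator S | ℱ n] := by
                filter_upwards [hstepE] with ω hω
                simp only [Pi.add_apply]
                rw [hω]
            _ =ᵐ[μ] μ[fun ω' => B.indicator F ω' + B.indicator S ω' | ℱ n] :=
                (condExp_add hF_int hBS_int (ℱ n)).symm
            _ =ᵐ[μ] μ[T | ℱ n] := by rw [hstepG]
        rw [hLrec' n hn]
        filter_upwards [hsuff] with ω hω
        rw [hω]
    intro n hn
    exact key (N - n) n (by omega)
  -- transfer from L back to l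
  intro n hn
  have hae : ∀ᵐ ω ∂μ, ∀ k, k ∈ Finset.Icc (n + 1) N → l k ω = L k ω := by
    rw [ae_all_iff]
    intro k
    by_cases hk : k ∈ Finset.Icc (n + 1) N
    · simp only [Finset.mem_Icc] at hk
      filter_upwards [hlL k hk.2] with ω hω _
      exact hω
    · filter_upwards with ω hk'
      exact absurd hk' hk
  have hTeq : (fun ω' => ∑ m ∈ Finset.Icc (n + 1) N,
      (Set.indicator {ω'' | ∀ k ∈ Finset.Icc (n + 1) m, Y k ω'' < l k ω''}
        (fun _ => (1 : ℝ)) ω') * (c * v (m + 1) ω' - Y m ω'))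
      =ᵐ[μ] (fun ω' => ∑ m ∈ Finset.Icc (n + 1) N,
      (Set.indicator {ω'' | ∀ k ∈ Finset.Icc (n + 1) m, Y k ω'' < L k ω''}
        (fun _ => (1 : ℝ)) ω') * (c * v (m + 1) ω' - Y m ω')) := by
    filter_upwards [hae] with ω' hω'
    refine Finset.sum_congr rfl (fun m hm => ?_)
    simp only [Finset.mem_Icc] at hm
    have hiff : (ω' ∈ {ω'' | ∀ k ∈ Finset.Icc (n + 1) m, Y k ω'' < l k ω''})
        ↔ (ω' ∈ {ω'' | ∀ k ∈ Finset.Icc (n + 1) m, Y k ω'' < L k ω''}) := by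
      constructor
      · intro hmem k hk
        have hk' : k ∈ Finset.Icc (n + 1) N := by
          simp only [Finset.mem_Icc] at hk ⊢; omega
        rw [← hω' k hk']
        exact hmem k hk
      · intro hmem k hk
        have hk' : k ∈ Finset.Icc (n + 1) N := by
          simp only [Finset.mem_Icc] at hk ⊢; omega
        rw [hω' k hk']
        exact hmem k hk
    by_cases hmem : ω' ∈ {ω'' | ∀ k ∈ Finset.Icc (n + 1) m, Y k ω'' < l k ω''}
    · rw [Set.indicator_of_mem hmem, Set.indicator_of_mem (hiff.1 hmem)]
    · rw [Set.indicator_of_notMem hmem,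
        Set.indicator_of_notMem (fun h => hmem (hiff.2 h))]
  have hcond := condExp_congr_ae (m := ℱ n) hTeq
  filter_upwards [hlL n hn, main n hn, hcond] with ω h1 h2 h3
  rw [h1, h2, h3]
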